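/- Let 0 < x₁ < x₂ < 1 and let h₁, h₂ : [0,1] → ℝ be continuously differentiable with h₁(0) = h₂(0) = 0, h₁(1) = x₁, h₂(1) = x₂, and 0 ≤ h₁'(y) ≤ h₂'(y) ≤ 1 for all y ∈ [0,1]. Define C(x,y) = min(x, h₁(y)) for x ∈ [0,x₁], C(x,y) = max(x + h₂(y) − x₂, h₁(y)) for x ∈ [x₁,x₂], C(x,y) = min(x − x₂ + h₂(y), y) for x ∈ [x₂,1]. Let μ be a doubly stochastic measure on [0,1]² with μ([0,x]×[0,y]) = C(x,y) for all (x,y) ∈ [0,1]². Then for every continuous F : [0,1]² → ℝ, ∫ F dμ = ∫₀¹ [ F(h₁(y), y)·h₁'(y) + F(x₂ − h₂(y) + h₁(y), y)·(h₂'(y) − h₁'(y)) + F(x₂ − h₂(y) + y, y)·(1 − h₂'(y)) ] dy. -/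

import Mathlib

open MeasureTheory Set
open scoped NNReal ENNReal


lemma lemA (g g' : ℝ → ℝ) (b : ℝ) (hb : 0 ≤ b)
    (hd : ∀ y ∈ Icc 0 b, HasDerivWithinAt g (g' y) (Icc 0 b) y)
    (hpos : ∀ y ∈ Icc 0 b, 0 ≤ g' y)
    (hint : IntegrableOn g' (Icc 0 b)) (a : ℝ) :
    ∫ y in Icc 0 b, (if g y ≤ a then g' y else 0) =
      min (g b) (max a (g 0)) - g 0 := by
  have hb0 : (0:ℝ) ∈ Icc 0 b := ⟨le_refl _, hb⟩
  have hbb : b ∈ Icc (0:ℝ) b := ⟨hb, le_refl _⟩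
  have hcont : ContinuousOn g (Icc 0 b) := fun y hy => (hd y hy).continuousWithinAt
  have hdiff : ∀ y ∈ Ioo (0:ℝ) b, HasDerivAt g (g' y) y := by
    intro y hy
    exact (hd y (Ioo_subset_Icc_self hy)).hasDerivAt (Icc_mem_nhds hy.1 hy.2)
  have hmono : MonotoneOn g (Icc 0 b) := by
    apply monotoneOn_of_deriv_nonneg (convex_Icc 0 b) hcont
    · intro y hy
      rw [interior_Icc] at hy
      exact (hdiff y hy).differentiableAt.differentiableWithinAt
    · intro y hy
      rw [interior_Icc] at hy
      rw [(hdiff y hy).deriv]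
      exact hpos y (Ioo_subset_Icc_self hy)
  by_cases h0 : a < g 0
  · have : ∀ y ∈ Icc (0:ℝ) b, (if g y ≤ a then g' y else 0) = 0 := by
      intro y hy
      rw [if_neg]
      exact not_le.2 (lt_of_lt_of_le h0 (hmono hb0 hy hy.1))
    rw [setIntegral_congr_fun measurableSet_Icc this]
    have : min (g b) (max a (g 0)) = g 0 := by
      rw [max_eq_right h0.le, min_eq_right (hmono hb0 hbb hb)]
    rw [this]
    simp
  push_neg at h0
  set D := {y ∈ Icc (0:ℝ) b | g y ≤ a} with hD
  have hne : (0:ℝ) ∈ D := ⟨hb0, h0⟩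
  have hbdd : BddAbove D := ⟨b, fun y hy => hy.1.2⟩
  set c := sSup D with hc
  have hc0 : 0 ≤ c := le_csSup hbdd hne
  have hcb : c ≤ b := csSup_le ⟨0, hne⟩ fun y hy => hy.1.2
  have hcI : c ∈ Icc (0:ℝ) b := ⟨hc0, hcb⟩
  have hlt : ∀ y ∈ Icc (0:ℝ) b, y < c → g y ≤ a := by
    intro y hy hyc
    obtain ⟨d, hdD, hyd⟩ := exists_lt_of_lt_csSup ⟨0, hne⟩ hyc
    exact le_trans (hmono hy hdD.1 hyd.le) hdD.2
  have hgt : ∀ y ∈ Icc (0:ℝ) b, c < y → a < g y := by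
    intro y hy hcy
    by_contra h
    push_neg at h
    exact absurd (le_csSup hbdd ⟨hy, h⟩) (not_le.2 hcy)
  have hFTC : ∫ y in (0:ℝ)..c, g' y = g c - g 0 := by
    apply intervalIntegral.integral_eq_sub_of_hasDeriv_right_of_le hc0
      (hcont.mono (Icc_subset_Icc le_rfl hcb))
    · intro y hy
      exact (hdiff y ⟨hy.1, lt_of_lt_of_le hy.2 hcb⟩).hasDerivWithinAt
    · apply IntegrableOn.intervalIntegrable
      rw [uIcc_of_le hc0]
      exact hint.mono_set (Icc_subset_Icc le_rfl hcb)
  have hae : ∀ᵐ (y:ℝ), y ∈ Icc (0:ℝ) b →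
      (if g y ≤ a then g' y else 0) = (Icc (0:ℝ) c).indicator g' y := by
    have h1 : ∀ᵐ (y:ℝ), y ≠ c := by
      have : (volume : Measure ℝ) {c} = 0 := measure_singleton c
      exact ae_iff.2 (by simpa using this)
    filter_upwards [h1] with y hyne hyI
    rcases lt_trichotomy y c with h | h | h
    · rw [if_pos (hlt y hyI h), indicator_of_mem (mem_Icc.2 ⟨hyI.1, h.le⟩)]
    · exact absurd h hyne
    · rw [if_neg (not_le.2 (hgt y hyI h)),
        indicator_of_notMem (fun hm => absurd hm.2 (not_le.2 h))]
  rw [setIntegral_congr_ae measurableSet_Icc hae,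
    setIntegral_indicator measurableSet_Icc,
    inter_eq_self_of_subset_right (Icc_subset_Icc le_rfl hcb),
    integral_Icc_eq_integral_Ioc, ← intervalIntegral.integral_of_le hc0, hFTC]
  congr 1
  rw [max_eq_left h0]
  by_cases hgb : g b ≤ a
  · have hcbb : c = b := le_antisymm hcb (le_csSup hbdd ⟨hbb, hgb⟩)
    rw [hcbb, min_eq_left hgb]
  · push_neg at hgb
    have hgca : g c ≤ a := by
      rcases eq_or_lt_of_le hc0 with h | h
      · rw [← h]; exact h0
      · have hten : Filter.Tendsto g (nhdsWithin c (Ico 0 c)) (nhds (g c)) :=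
          (hcont c hcI).mono (Ico_subset_Icc_self.trans (Icc_subset_Icc le_rfl hcb))
        have hnb : (nhdsWithin c (Ico (0:ℝ) c)).NeBot := right_nhdsWithin_Ico_neBot h
        refine le_of_tendsto hten ?_
        filter_upwards [self_mem_nhdsWithin] with y hy
        exact hlt y ⟨hy.1, hy.2.le.trans hcb⟩ hy.2
    have hcltb : c < b := by
      rcases lt_or_eq_of_le hcb with h | h
      · exact h
      · exact absurd (h ▸ hgca) (not_le.2 hgb)
    have hgca' : a ≤ g c := by
      have hten : Filter.Tendsto g (nhdsWithin c (Ioc c b)) (nhds (g c)) :=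
        (hcont c hcI).mono (Ioc_subset_Icc_self.trans (Icc_subset_Icc hc0 le_rfl))
      have hnb : (nhdsWithin c (Ioc c b)).NeBot := left_nhdsWithin_Ioc_neBot hcltb
      refine ge_of_tendsto hten ?_
      filter_upwards [self_mem_nhdsWithin] with y hy
      exact (hgt y ⟨hc0.trans hy.1.le, hy.2⟩ hy.1).le
    rw [le_antisymm hgca hgca', min_eq_right hgb.le]

lemma lemB (g g' : ℝ → ℝ) (b : ℝ) (hb : 0 ≤ b)
    (hd : ∀ y ∈ Icc 0 b, HasDerivWithinAt g (g' y) (Icc 0 b) y)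
    (hneg : ∀ y ∈ Icc 0 b, g' y ≤ 0)
    (hint : IntegrableOn g' (Icc 0 b)) (a : ℝ) :
    ∫ y in Icc 0 b, (if g y ≤ a then -g' y else 0) =
      min (g 0) (max a (g b)) - g b := by
  set G : ℝ → ℝ := fun u => g (b - u) with hG
  set G' : ℝ → ℝ := fun u => -g' (b - u) with hG'
  have hmaps : ∀ u ∈ Icc (0:ℝ) b, b - u ∈ Icc (0:ℝ) b := by
    intro u hu; exact ⟨by linarith [hu.2], by linarith [hu.1]⟩
  have hdG : ∀ u ∈ Icc (0:ℝ) b, HasDerivWithinAt G (G' u) (Icc 0 b) u := by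
    intro u hu
    have hinner : HasDerivWithinAt (fun u : ℝ => b - u) (-1) (Icc 0 b) u :=
      (hasDerivWithinAt_id u (Icc 0 b)).const_sub b
    have := HasDerivWithinAt.comp u (hd (b - u) (hmaps u hu)) hinner
      (fun y hy => hmaps y hy)
    have heq : g' (b - u) * (-1) = G' u := by simp [hG']
    rw [heq] at this
    exact this
  have hposG : ∀ u ∈ Icc (0:ℝ) b, 0 ≤ G' u := by
    intro u hu
    simp only [hG', neg_nonneg]
    exact hneg (b - u) (hmaps u hu)
  have hintG : IntegrableOn G' (Icc 0 b) := by
    have h1 : IntervalIntegrable g' volume 0 b :=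
      (intervalIntegrable_iff_integrableOn_Icc_of_le hb).2 hint
    have h2 := (h1.comp_sub_left b).neg
    rw [sub_zero, sub_self] at h2
    exact (intervalIntegrable_iff_integrableOn_Icc_of_le hb).1 h2.symm
  have := lemA G G' b hb hdG hposG hintG a
  have hGb : G b = g 0 := by simp [hG]
  have hG0 : G 0 = g b := by simp [hG]
  rw [hGb, hG0] at this
  rw [← this]
  rw [integral_Icc_eq_integral_Ioc, integral_Icc_eq_integral_Ioc,
    ← intervalIntegral.integral_of_le hb, ← intervalIntegral.integral_of_le hb]
  have : (fun u => if G u ≤ a then G' u else 0) =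
      fun u => (if g (b - u) ≤ a then -g' (b - u) else 0) := rfl
  rw [this, intervalIntegral.integral_comp_sub_left (fun y => if g y ≤ a then -g' y else 0) b]
  rw [sub_zero, sub_self]


lemma mass_eq (W : ℝ → ℝ) (hW : Continuous W) (hWnn : ∀ y, 0 ≤ W y) (G : ℝ → ℝ)
    (hG : Continuous G) (s : Set (ℝ × ℝ)) (hs : MeasurableSet s) :
    (((volume.restrict (Icc (0:ℝ) 1)).withDensity (fun y => ENNReal.ofReal (W y))).map
        (fun y => (G y, y))) s
      = ENNReal.ofReal (∫ y in (fun y : ℝ => (G y, y)) ⁻¹' s ∩ Icc (0:ℝ) 1, W y) := by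
  have hfm : Measurable (fun y : ℝ => (G y, y)) := (hG.prodMk continuous_id).measurable
  rw [Measure.map_apply hfm hs, withDensity_apply _ (hfm hs), Measure.restrict_restrict (hfm hs)]
  rw [← ofReal_integral_eq_lintegral_ofReal]
  · exact (hW.integrableOn_Icc).mono_set inter_subset_right
  · exact Filter.Eventually.of_forall (fun y => hWnn y)

lemma integ_eq (W : ℝ → ℝ) (hW : Continuous W) (hWnn : ∀ y, 0 ≤ W y) (G : ℝ → ℝ)
    (hG : Continuous G) (F : ℝ × ℝ → ℝ)
    (hF : AEStronglyMeasurable F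
      (((volume.restrict (Icc (0:ℝ) 1)).withDensity (fun y => ENNReal.ofReal (W y))).map
        (fun y => (G y, y)))) :
    ∫ p, F p ∂(((volume.restrict (Icc (0:ℝ) 1)).withDensity
        (fun y => ENNReal.ofReal (W y))).map (fun y => (G y, y)))
      = ∫ y in Icc (0:ℝ) 1, W y * F (G y, y) := by
  have hfm : Measurable (fun y : ℝ => (G y, y)) := (hG.prodMk continuous_id).measurable
  rw [integral_map hfm.aemeasurable hF]
  have hrw : (fun y : ℝ => ENNReal.ofReal (W y))
      = fun y => ((Real.toNNReal (W y) : ℝ≥0) : ℝ≥0∞) := rfl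
  have hm : Measurable (fun y : ℝ => Real.toNNReal (W y)) :=
    (continuous_real_toNNReal.comp hW).measurable
  rw [hrw, integral_withDensity_eq_integral_smul hm (fun y => F (G y, y))]
  refine integral_congr_ae (Filter.Eventually.of_forall fun y => ?_)
  show (Real.toNNReal (W y) : ℝ≥0) • F (G y, y) = W y * F (G y, y)
  rw [NNReal.smul_def, Real.coe_toNNReal _ (hWnn y), smul_eq_mul]


lemma monoIcc (f f' : ℝ → ℝ) (b : ℝ)
    (hd : ∀ y ∈ Icc (0:ℝ) b, HasDerivWithinAt f (f' y) (Icc 0 b) y)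
    (hpos : ∀ y ∈ Icc (0:ℝ) b, 0 ≤ f' y) : MonotoneOn f (Icc 0 b) := by
  have hcont : ContinuousOn f (Icc 0 b) := fun y hy => (hd y hy).continuousWithinAt
  have hdiff : ∀ y ∈ Ioo (0:ℝ) b, HasDerivAt f (f' y) y := by
    intro y hy
    exact (hd y (Ioo_subset_Icc_self hy)).hasDerivAt (Icc_mem_nhds hy.1 hy.2)
  apply monotoneOn_of_deriv_nonneg (convex_Icc 0 b) hcont
  · intro y hy
    rw [interior_Icc] at hy
    exact (hdiff y hy).differentiableAt.differentiableWithinAt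
  · intro y hy
    rw [interior_Icc] at hy
    rw [(hdiff y hy).deriv]
    exact hpos y (Ioo_subset_Icc_self hy)

/-- A doubly stochastic measure on `[0,1]²`. -/
def IsDoublyStochastic (μ : Measure (ℝ × ℝ)) : Prop :=
  IsProbabilityMeasure μ ∧
  (∀ B : Set ℝ, MeasurableSet B → B ⊆ Icc 0 1 → μ (B ×ˢ Icc (0:ℝ) 1) = volume B) ∧
  (∀ B : Set ℝ, MeasurableSet B → B ⊆ Icc 0 1 → μ (Icc (0:ℝ) 1 ×ˢ B) = volume B)

theorem stmt7 (x₁ x₂ : ℝ) (hx₁ : 0 < x₁) (hx₁₂ : x₁ < x₂) (hx₂ : x₂ < 1)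
    (h₁ h₂ h₁' h₂' : ℝ → ℝ)
    (hd₁ : ∀ y ∈ Icc (0:ℝ) 1, HasDerivWithinAt h₁ (h₁' y) (Icc 0 1) y)
    (hd₂ : ∀ y ∈ Icc (0:ℝ) 1, HasDerivWithinAt h₂ (h₂' y) (Icc 0 1) y)
    (hc₁ : ContinuousOn h₁' (Icc (0:ℝ) 1)) (hc₂ : ContinuousOn h₂' (Icc (0:ℝ) 1))
    (hh₁0 : h₁ 0 = 0) (hh₂0 : h₂ 0 = 0) (hh₁1 : h₁ 1 = x₁) (hh₂1 : h₂ 1 = x₂)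
    (hbound : ∀ y ∈ Icc (0:ℝ) 1, 0 ≤ h₁' y ∧ h₁' y ≤ h₂' y ∧ h₂' y ≤ 1)
    (μ : Measure (ℝ × ℝ)) (hds : IsDoublyStochastic μ)
    (hdist : ∀ x ∈ Icc (0:ℝ) 1, ∀ y ∈ Icc (0:ℝ) 1,
      (x ∈ Icc 0 x₁ → (μ (Icc 0 x ×ˢ Icc 0 y)).toReal = min x (h₁ y)) ∧
      (x ∈ Icc x₁ x₂ → (μ (Icc 0 x ×ˢ Icc 0 y)).toReal = max (x + h₂ y - x₂) (h₁ y)) ∧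
      (x ∈ Icc x₂ 1 → (μ (Icc 0 x ×ˢ Icc 0 y)).toReal = min (x - x₂ + h₂ y) y)) :
    ∀ F : ℝ × ℝ → ℝ, ContinuousOn F (Icc (0:ℝ) 1 ×ˢ Icc (0:ℝ) 1) →
      ∫ p, F p ∂μ =
        ∫ y in (0:ℝ)..1,
          (F (h₁ y, y) * h₁' y +
           F (x₂ - h₂ y + h₁ y, y) * (h₂' y - h₁' y) +
           F (x₂ - h₂ y + y, y) * (1 - h₂' y)) := by
  intro F hF
  obtain ⟨hprob, hmarg1, hmarg2⟩ := hds
  haveI := hprob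
  -- the clamp function
  set cl : ℝ → ℝ := fun y => max 0 (min 1 y) with hcl
  have hclc : Continuous cl := continuous_const.max (continuous_const.min continuous_id)
  have hclmem : ∀ y, cl y ∈ Icc (0:ℝ) 1 :=
    fun y => ⟨le_max_left _ _, max_le zero_le_one (min_le_left _ _)⟩
  have hclid : ∀ y ∈ Icc (0:ℝ) 1, cl y = y := by
    intro y hy
    rw [hcl]
    simp only
    rw [min_eq_right hy.2, max_eq_right hy.1]
  have hcl0 : cl 0 = 0 := hclid 0 (by norm_num)
  -- weights and curves
  set W₁ : ℝ → ℝ := fun y => h₁' (cl y) with hW₁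
  set W₂ : ℝ → ℝ := fun y => h₂' (cl y) - h₁' (cl y) with hW₂
  set W₃ : ℝ → ℝ := fun y => 1 - h₂' (cl y) with hW₃
  set G₁ : ℝ → ℝ := fun y => h₁ (cl y) with hG₁
  set G₂ : ℝ → ℝ := fun y => x₂ - h₂ (cl y) + h₁ (cl y) with hG₂
  set G₃ : ℝ → ℝ := fun y => x₂ - h₂ (cl y) + cl y with hG₃
  have hcont₁ : ContinuousOn h₁ (Icc 0 1) := fun y hy => (hd₁ y hy).continuousWithinAt
  have hcont₂ : ContinuousOn h₂ (Icc 0 1) := fun y hy => (hd₂ y hy).continuousWithinAt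
  have hW₁c : Continuous W₁ := hc₁.comp_continuous hclc hclmem
  have hW₂c : Continuous W₂ :=
    (hc₂.comp_continuous hclc hclmem).sub (hc₁.comp_continuous hclc hclmem)
  have hW₃c : Continuous W₃ := continuous_const.sub (hc₂.comp_continuous hclc hclmem)
  have hG₁c : Continuous G₁ := hcont₁.comp_continuous hclc hclmem
  have hG₂c : Continuous G₂ :=
    (continuous_const.sub (hcont₂.comp_continuous hclc hclmem)).add
      (hcont₁.comp_continuous hclc hclmem)
  have hG₃c : Continuous G₃ :=
    (continuous_const.sub (hcont₂.comp_continuous hclc hclmem)).add hclc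
  have hW₁nn : ∀ y, 0 ≤ W₁ y := fun y => (hbound (cl y) (hclmem y)).1
  have hW₂nn : ∀ y, 0 ≤ W₂ y := fun y => sub_nonneg.2 (hbound (cl y) (hclmem y)).2.1
  have hW₃nn : ∀ y, 0 ≤ W₃ y := fun y => sub_nonneg.2 (hbound (cl y) (hclmem y)).2.2
  -- monotonicity facts
  have hmono₁ : MonotoneOn h₁ (Icc 0 1) :=
    monoIcc h₁ h₁' 1 hd₁ (fun y hy => (hbound y hy).1)
  have hmono₂₁ : MonotoneOn (fun y => h₂ y - h₁ y) (Icc 0 1) :=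
    monoIcc _ (fun y => h₂' y - h₁' y) 1 (fun y hy => (hd₂ y hy).sub (hd₁ y hy))
      (fun y hy => sub_nonneg.2 (hbound y hy).2.1)
  have hmono₂ : MonotoneOn h₂ (Icc 0 1) :=
    monoIcc h₂ h₂' 1 hd₂ (fun y hy => le_trans (hbound y hy).1 (hbound y hy).2.1)
  have hmono₃ : MonotoneOn (fun y => y - h₂ y) (Icc 0 1) :=
    monoIcc _ (fun y => 1 - h₂' y) 1
      (fun y hy => ((hasDerivWithinAt_id y (Icc 0 1)).sub (hd₂ y hy)))
      (fun y hy => sub_nonneg.2 (hbound y hy).2.2)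
  have hfacts : ∀ t ∈ Icc (0:ℝ) 1, 0 ≤ h₁ t ∧ h₁ t ≤ h₂ t ∧ h₂ t ≤ t ∧
      h₂ t - h₁ t ≤ x₂ - x₁ ∧ h₁ t ≤ x₁ ∧ h₂ t ≤ x₂ ∧ t - h₂ t ≤ 1 - x₂ := by
    intro t ht
    have h01 : (0:ℝ) ∈ Icc (0:ℝ) 1 := by norm_num
    have h11 : (1:ℝ) ∈ Icc (0:ℝ) 1 := by norm_num
    have k1 := hmono₁ h01 ht ht.1
    have k2 := hmono₂₁ h01 ht ht.1
    have k3 := hmono₃ h01 ht ht.1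
    have k4 := hmono₂₁ ht h11 ht.2
    have k5 := hmono₁ ht h11 ht.2
    have k6 := hmono₂ ht h11 ht.2
    have k7 := hmono₃ ht h11 ht.2
    simp only [hh₁0, hh₂0, hh₁1, hh₂1] at k1 k2 k3 k4 k5 k6 k7
    refine ⟨by linarith, by linarith, by linarith, by linarith, by linarith,
      by linarith, by linarith⟩
  have hGmem : ∀ y, (0 ≤ G₁ y ∧ G₁ y ≤ 1) ∧ (0 ≤ G₂ y ∧ G₂ y ≤ 1) ∧
      (0 ≤ G₃ y ∧ G₃ y ≤ 1) := by
    intro y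
    obtain ⟨f1, f2, f3, f4, f5, f6, f7⟩ := hfacts (cl y) (hclmem y)
    have hcy1 : 0 ≤ cl y := (hclmem y).1
    have hcy2 : cl y ≤ 1 := (hclmem y).2
    simp only [hG₁, hG₂, hG₃]
    refine ⟨⟨by linarith, by linarith⟩, ⟨by linarith, by linarith⟩,
      ⟨by linarith, by linarith⟩⟩
  -- the measures
  set ν₁ : Measure (ℝ × ℝ) := ((volume.restrict (Icc (0:ℝ) 1)).withDensity
    (fun y => ENNReal.ofReal (W₁ y))).map (fun y => (G₁ y, y)) with hν₁
  set ν₂ : Measure (ℝ × ℝ) := ((volume.restrict (Icc (0:ℝ) 1)).withDensity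
    (fun y => ENNReal.ofReal (W₂ y))).map (fun y => (G₂ y, y)) with hν₂
  set ν₃ : Measure (ℝ × ℝ) := ((volume.restrict (Icc (0:ℝ) 1)).withDensity
    (fun y => ENNReal.ofReal (W₃ y))).map (fun y => (G₃ y, y)) with hν₃
  set ν : Measure (ℝ × ℝ) := ν₁ + ν₂ + ν₃ with hν
  have hm₁ : ∀ s, MeasurableSet s → ν₁ s =
      ENNReal.ofReal (∫ y in (fun y : ℝ => (G₁ y, y)) ⁻¹' s ∩ Icc (0:ℝ) 1, W₁ y) :=
    fun s hs => mass_eq W₁ hW₁c hW₁nn G₁ hG₁c s hs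
  have hm₂ : ∀ s, MeasurableSet s → ν₂ s =
      ENNReal.ofReal (∫ y in (fun y : ℝ => (G₂ y, y)) ⁻¹' s ∩ Icc (0:ℝ) 1, W₂ y) :=
    fun s hs => mass_eq W₂ hW₂c hW₂nn G₂ hG₂c s hs
  have hm₃ : ∀ s, MeasurableSet s → ν₃ s =
      ENNReal.ofReal (∫ y in (fun y : ℝ => (G₃ y, y)) ⁻¹' s ∩ Icc (0:ℝ) 1, W₃ y) :=
    fun s hs => mass_eq W₃ hW₃c hW₃nn G₃ hG₃c s hs
  set sq : Set (ℝ × ℝ) := Icc (0:ℝ) 1 ×ˢ Icc (0:ℝ) 1 with hsq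
  have hsqm : MeasurableSet sq := measurableSet_Icc.prod measurableSet_Icc
  -- support facts
  have hν₁sq : ν₁ sqᶜ = 0 := by
    rw [hm₁ _ hsqm.compl]
    have hempty : (fun y : ℝ => (G₁ y, y)) ⁻¹' sqᶜ ∩ Icc (0:ℝ) 1 = ∅ := by
      apply eq_empty_of_forall_notMem
      intro y hy
      exact hy.1 (mem_prod.2 ⟨mem_Icc.2 ⟨(hGmem y).1.1, (hGmem y).1.2⟩, hy.2⟩)
    rw [hempty]
    simp
  have hν₂sq : ν₂ sqᶜ = 0 := by
    rw [hm₂ _ hsqm.compl]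
    have hempty : (fun y : ℝ => (G₂ y, y)) ⁻¹' sqᶜ ∩ Icc (0:ℝ) 1 = ∅ := by
      apply eq_empty_of_forall_notMem
      intro y hy
      exact hy.1 (mem_prod.2 ⟨mem_Icc.2 ⟨(hGmem y).2.1.1, (hGmem y).2.1.2⟩, hy.2⟩)
    rw [hempty]
    simp
  have hν₃sq : ν₃ sqᶜ = 0 := by
    rw [hm₃ _ hsqm.compl]
    have hempty : (fun y : ℝ => (G₃ y, y)) ⁻¹' sqᶜ ∩ Icc (0:ℝ) 1 = ∅ := by
      apply eq_empty_of_forall_notMem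
      intro y hy
      exact hy.1 (mem_prod.2 ⟨mem_Icc.2 ⟨(hGmem y).2.2.1, (hGmem y).2.2.2⟩, hy.2⟩)
    rw [hempty]
    simp
  have hνsq : ν sqᶜ = 0 := by
    rw [hν]
    simp [Measure.add_apply, hν₁sq, hν₂sq, hν₃sq]
  have hμsq : μ sq = 1 := by
    rw [hsq, hmarg2 (Icc 0 1) measurableSet_Icc subset_rfl, Real.volume_Icc]
    norm_num
  have hμc : μ sqᶜ = 0 := by
    rw [measure_compl hsqm (measure_ne_top μ sq), hμsq, measure_univ, tsub_self]
  have hsupp : ∀ (m : Measure (ℝ × ℝ)), m sqᶜ = 0 → ∀ s, m s = m (s ∩ sq) := by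
    intro m hm s
    have h1 : m s = m (s ∩ sq) + m (s \ sq) := (measure_inter_add_diff s hsqm).symm
    have h2 : m (s \ sq) = 0 :=
      measure_mono_null (fun x hx => hx.2) hm
    rw [h1, h2, add_zero]
  -- the core rectangle identity
  have hcore : ∀ a ∈ Icc (0:ℝ) 1, ∀ b ∈ Icc (0:ℝ) 1,
      μ (Icc 0 a ×ˢ Icc 0 b) = ν (Icc 0 a ×ˢ Icc 0 b) := by
    intro a ha b hb
    obtain ⟨f1, f2, f3, f4, f5, f6, f7⟩ := hfacts b hb
    have ha0 := ha.1
    have ha1 := ha.2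
    have hb0 := hb.1
    have hb1 := hb.2
    have hrm : MeasurableSet (Icc (0:ℝ) 0 ×ˢ Icc (0:ℝ) 1) := measurableSet_Icc.prod measurableSet_Icc
    have hpre : ∀ (G : ℝ → ℝ), (∀ y, 0 ≤ G y) →
        (fun y : ℝ => (G y, y)) ⁻¹' (Icc 0 a ×ˢ Icc 0 b) ∩ Icc (0:ℝ) 1
          = Icc 0 b ∩ {y | G y ≤ a} := by
      intro G hG
      ext y
      simp only [mem_inter_iff, mem_preimage, prodMk_mem_set_prod_eq, mem_Icc, mem_setOf_eq]
      constructor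
      · rintro ⟨⟨⟨-, hGa⟩, hyb⟩, -⟩
        exact ⟨hyb, hGa⟩
      · rintro ⟨hyb, hGa⟩
        exact ⟨⟨⟨hG y, hGa⟩, hyb⟩, hyb.1, hyb.2.trans hb1⟩
    have hind : ∀ (G W : ℝ → ℝ), Continuous G →
        ∫ y in Icc 0 b ∩ {y | G y ≤ a}, W y
          = ∫ y in Icc (0:ℝ) b, (if G y ≤ a then W y else 0) := by
      intro G W hGc
      rw [← setIntegral_indicator (measurableSet_le hGc.measurable measurable_const)]
      refine setIntegral_congr_fun measurableSet_Icc (fun y hy => ?_)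
      rw [indicator_apply]
      simp [mem_setOf_eq]
    have hrectm : MeasurableSet (Icc (0:ℝ) a ×ˢ Icc (0:ℝ) b) :=
      measurableSet_Icc.prod measurableSet_Icc
    -- piece 1
    have e₁ : ν₁ (Icc 0 a ×ˢ Icc 0 b)
        = ENNReal.ofReal (min (h₁ b) (max a 0)) := by
      rw [hm₁ _ hrectm, hpre G₁ (fun y => (hGmem y).1.1), hind G₁ W₁ hG₁c]
      rw [lemA G₁ W₁ b hb0 ?_ (fun y _ => hW₁nn y) hW₁c.integrableOn_Icc a]
      · have k1 : G₁ b = h₁ b := by rw [hG₁]; simp only; rw [hclid b hb]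
        have k2 : G₁ 0 = 0 := by rw [hG₁]; simp only; rw [hcl0, hh₁0]
        rw [k1, k2, sub_zero]
      · intro y hy
        have hy' : y ∈ Icc (0:ℝ) 1 := ⟨hy.1, hy.2.trans hb1⟩
        have H := (hd₁ y hy').mono (Icc_subset_Icc le_rfl hb1)
        have hWr : W₁ y = h₁' y := by rw [hW₁]; simp only; rw [hclid y hy']
        rw [hWr]
        refine H.congr (fun t ht => ?_) ?_
        · rw [hG₁]; simp only; rw [hclid t ⟨ht.1, ht.2.trans hb1⟩]
        · rw [hG₁]; simp only; rw [hclid y hy']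
    -- piece 2
    have e₂ : ν₂ (Icc 0 a ×ˢ Icc 0 b)
        = ENNReal.ofReal (min x₂ (max a (x₂ - h₂ b + h₁ b)) - (x₂ - h₂ b + h₁ b)) := by
      rw [hm₂ _ hrectm, hpre G₂ (fun y => (hGmem y).2.1.1), hind G₂ W₂ hG₂c]
      have hcong : ∫ y in Icc (0:ℝ) b, (if G₂ y ≤ a then W₂ y else 0)
          = ∫ y in Icc (0:ℝ) b, (if G₂ y ≤ a then -(h₁' (cl y) - h₂' (cl y)) else 0) := by
        refine setIntegral_congr_fun measurableSet_Icc (fun y hy => ?_)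
        rw [hW₂]
        simp only [neg_sub]
      rw [hcong]
      rw [lemB G₂ (fun y => h₁' (cl y) - h₂' (cl y)) b hb0 ?_
        (fun y _ => sub_nonpos.2 (hbound (cl y) (hclmem y)).2.1)
        ((hc₁.comp_continuous hclc hclmem).sub (hc₂.comp_continuous hclc hclmem)).integrableOn_Icc a]
      · have k1 : G₂ b = x₂ - h₂ b + h₁ b := by
          rw [hG₂]; simp only; rw [hclid b hb]
        have k2 : G₂ 0 = x₂ := by
          rw [hG₂]; simp only; rw [hcl0, hh₁0, hh₂0]; ring
        rw [k1, k2]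
      · intro y hy
        have hy' : y ∈ Icc (0:ℝ) 1 := ⟨hy.1, hy.2.trans hb1⟩
        have H := (((hasDerivWithinAt_const y (Icc (0:ℝ) 1) x₂).sub (hd₂ y hy')).add
          (hd₁ y hy')).mono (Icc_subset_Icc le_rfl hb1)
        have hWr : h₁' (cl y) - h₂' (cl y) = 0 - h₂' y + h₁' y := by
          rw [hclid y hy']; ring
        show HasDerivWithinAt G₂ (h₁' (cl y) - h₂' (cl y)) (Icc 0 b) y
        rw [hWr]
        refine H.congr (fun t ht => ?_) ?_
        · rw [hG₂]; simp only; rw [hclid t ⟨ht.1, ht.2.trans hb1⟩]; rfl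
        · rw [hG₂]; simp only; rw [hclid y hy']; rfl
    -- piece 3
    have e₃ : ν₃ (Icc 0 a ×ˢ Icc 0 b)
        = ENNReal.ofReal (min (x₂ - h₂ b + b) (max a x₂) - x₂) := by
      rw [hm₃ _ hrectm, hpre G₃ (fun y => (hGmem y).2.2.1), hind G₃ W₃ hG₃c]
      rw [lemA G₃ W₃ b hb0 ?_ (fun y _ => hW₃nn y) hW₃c.integrableOn_Icc a]
      · have k1 : G₃ b = x₂ - h₂ b + b := by rw [hG₃]; simp only; rw [hclid b hb]
        have k2 : G₃ 0 = x₂ := by rw [hG₃]; simp only; rw [hcl0, hh₂0]; ring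
        rw [k1, k2]
      · intro y hy
        have hy' : y ∈ Icc (0:ℝ) 1 := ⟨hy.1, hy.2.trans hb1⟩
        have H := (((hasDerivWithinAt_const y (Icc (0:ℝ) 1) x₂).sub (hd₂ y hy')).add
          (hasDerivWithinAt_id y (Icc (0:ℝ) 1))).mono (Icc_subset_Icc le_rfl hb1)
        have hWr : W₃ y = 0 - h₂' y + 1 := by rw [hW₃]; simp only; rw [hclid y hy']; ring
        rw [hWr]
        refine H.congr (fun t ht => ?_) ?_
        · rw [hG₃]; simp only; rw [hclid t ⟨ht.1, ht.2.trans hb1⟩]; rfl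
        · rw [hG₃]; simp only; rw [hclid y hy']; rfl
    -- sum of the pieces
    have hsum : ν (Icc 0 a ×ˢ Icc 0 b) = ENNReal.ofReal
        (min (h₁ b) (max a 0)
          + (min x₂ (max a (x₂ - h₂ b + h₁ b)) - (x₂ - h₂ b + h₁ b))
          + (min (x₂ - h₂ b + b) (max a x₂) - x₂)) := by
      have n1 : (0:ℝ) ≤ min (h₁ b) (max a 0) := le_min f1 (le_max_right _ _)
      have n2 : (0:ℝ) ≤ min x₂ (max a (x₂ - h₂ b + h₁ b)) - (x₂ - h₂ b + h₁ b) := by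
        have := le_max_right a (x₂ - h₂ b + h₁ b)
        have : min x₂ (max a (x₂ - h₂ b + h₁ b)) ≥ x₂ - h₂ b + h₁ b :=
          le_min (by linarith) (le_max_right _ _)
        linarith
      have n3 : (0:ℝ) ≤ min (x₂ - h₂ b + b) (max a x₂) - x₂ := by
        have : min (x₂ - h₂ b + b) (max a x₂) ≥ x₂ :=
          le_min (by linarith) (le_max_right _ _)
        linarith
      rw [hν, Measure.add_apply, Measure.add_apply, e₁, e₂, e₃,
        ← ENNReal.ofReal_add n1 n2, ← ENNReal.ofReal_add (by linarith) n3]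
    -- the real arithmetic
    obtain ⟨c1, c2, c3⟩ := hdist a ha b hb
    have harith : (μ (Icc 0 a ×ˢ Icc 0 b)).toReal =
        min (h₁ b) (max a 0)
          + (min x₂ (max a (x₂ - h₂ b + h₁ b)) - (x₂ - h₂ b + h₁ b))
          + (min (x₂ - h₂ b + b) (max a x₂) - x₂) := by
      rw [max_eq_left ha0]
      rcases le_total a x₁ with hr | hr
      · rw [c1 ⟨ha0, hr⟩,
          max_eq_right (show a ≤ x₂ - h₂ b + h₁ b by linarith),
          min_eq_right (show x₂ - h₂ b + h₁ b ≤ x₂ by linarith),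
          max_eq_right (show a ≤ x₂ by linarith),
          min_eq_right (show x₂ ≤ x₂ - h₂ b + b by linarith),
          min_comm]
        ring
      · rcases le_total a x₂ with hr2 | hr2
        · rw [c2 ⟨hr, hr2⟩,
            min_eq_left (show h₁ b ≤ a by linarith),
            min_eq_right (max_le hr2 (by linarith : x₂ - h₂ b + h₁ b ≤ x₂)),
            max_eq_right hr2,
            min_eq_right (show x₂ ≤ x₂ - h₂ b + b by linarith)]
          rcases le_total a (x₂ - h₂ b + h₁ b) with h3 | h3
          · rw [max_eq_right h3, max_eq_right (by linarith : a + h₂ b - x₂ ≤ h₁ b)]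
            ring
          · rw [max_eq_left h3, max_eq_left (by linarith : h₁ b ≤ a + h₂ b - x₂)]
            ring
        · rw [c3 ⟨hr2, ha1⟩,
            min_eq_left (show h₁ b ≤ a by linarith),
            max_eq_left (show x₂ - h₂ b + h₁ b ≤ a by linarith),
            min_eq_left hr2,
            max_eq_left hr2]
          rcases le_total (x₂ - h₂ b + b) a with h3 | h3
          · rw [min_eq_left h3, min_eq_right (by linarith : b ≤ a - x₂ + h₂ b)]
            ring
          · rw [min_eq_right h3, min_eq_left (by linarith : a - x₂ + h₂ b ≤ b)]
            ring
    rw [hsum, ← harith, ENNReal.ofReal_toReal (measure_ne_top μ _)]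
  -- equality on Iic rectangles
  have hIic : ∀ a b : ℝ, μ (Iic a ×ˢ Iic b) = ν (Iic a ×ˢ Iic b) := by
    intro a b
    have hsm : MeasurableSet (Iic a ×ˢ Iic b) := measurableSet_Iic.prod measurableSet_Iic
    rw [hsupp μ hμc _, hsupp ν hνsq _]
    by_cases ha : 0 ≤ a
    · by_cases hb : 0 ≤ b
      · have hinter : Iic a ×ˢ Iic b ∩ sq = Icc 0 (min a 1) ×ˢ Icc 0 (min b 1) := by
          ext ⟨p, q⟩
          simp only [mem_inter_iff, prodMk_mem_set_prod_eq, mem_Iic, mem_Icc, hsq,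
            le_min_iff]
          tauto
        rw [hinter]
        exact hcore (min a 1) ⟨le_min ha zero_le_one, min_le_right _ _⟩
          (min b 1) ⟨le_min hb zero_le_one, min_le_right _ _⟩
      · have hinter : Iic a ×ˢ Iic b ∩ sq = ∅ := by
          apply eq_empty_of_forall_notMem
          rintro ⟨p, q⟩ ⟨hpq, hsqm'⟩
          have : q ≤ b := hpq.2
          have : 0 ≤ q := hsqm'.2.1
          linarith [lt_of_not_ge hb]
        rw [hinter]
        simp
    · have hinter : Iic a ×ˢ Iic b ∩ sq = ∅ := by
        apply eq_empty_of_forall_notMem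
        rintro ⟨p, q⟩ ⟨hpq, hsqm'⟩
        have : p ≤ a := hpq.1
        have : 0 ≤ p := hsqm'.1.1
        linarith [lt_of_not_ge ha]
      rw [hinter]
      simp
  -- extensionality
  have hspan : IsCountablySpanning (range (Iic : ℝ → Set ℝ)) := by
    refine ⟨fun n => Iic (n : ℝ), fun n => mem_range_self _, ?_⟩
    ext x
    simp only [mem_iUnion, mem_Iic, mem_univ, iff_true]
    obtain ⟨n, hn⟩ := exists_nat_ge x
    exact ⟨n, hn⟩
  have hgen : MeasurableSpace.generateFrom (range (Iic : ℝ → Set ℝ))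
      = (inferInstance : MeasurableSpace ℝ) := by
    rw [← borel_eq_generateFrom_Iic ℝ]
    exact BorelSpace.measurable_eq.symm
  have hμν : μ = ν := by
    refine MeasureTheory.ext_of_generate_finite
      (image2 (· ×ˢ ·) (range (Iic : ℝ → Set ℝ)) (range (Iic : ℝ → Set ℝ)))
      ?_ (isPiSystem_Iic.prod isPiSystem_Iic) ?_ ?_
    · exact (generateFrom_eq_prod hgen hgen hspan hspan).symm
    · rintro _ ⟨_, ⟨a, rfl⟩, _, ⟨b, rfl⟩, rfl⟩
      exact hIic a b
    · have h1 : μ univ = μ sq := by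
        rw [hsupp μ hμc univ, univ_inter]
      have h2 : ν univ = ν sq := by
        rw [hsupp ν hνsq univ, univ_inter]
      rw [h1, h2, hsq]
      have := hcore 1 (by norm_num) 1 (by norm_num)
      have hIcc1 : Icc (0:ℝ) 1 = Icc 0 (1:ℝ) := rfl
      exact this
  -- final integral computation
  haveI hfinν : IsFiniteMeasure ν := hμν ▸ inferInstance
  have haeν : ∀ᵐ p ∂ν, p ∈ sq := by
    rw [ae_iff]
    have hset : {p : ℝ × ℝ | ¬ p ∈ sq} = sqᶜ := rfl
    rw [hset]
    exact hνsq
  have hFm : AEStronglyMeasurable F ν := by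
    have h1 : AEStronglyMeasurable F (ν.restrict sq) := hF.aestronglyMeasurable hsqm
    rwa [Measure.restrict_eq_self_of_ae_mem haeν] at h1
  obtain ⟨M, hM⟩ := (isCompact_Icc.prod isCompact_Icc).exists_bound_of_continuousOn hF
  have hFint : Integrable F ν := by
    refine ⟨hFm, MeasureTheory.HasFiniteIntegral.of_bounded (C := M) ?_⟩
    filter_upwards [haeν] with p hp
    exact hM p hp
  have hle1 : ν₁ ≤ ν := by
    rw [hν]
    exact (Measure.le_add_right le_rfl).trans (Measure.le_add_right le_rfl)
  have hle2 : ν₂ ≤ ν := by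
    rw [hν]
    exact (Measure.le_add_left le_rfl).trans (Measure.le_add_right le_rfl)
  have hle3 : ν₃ ≤ ν := by
    rw [hν]
    exact Measure.le_add_left le_rfl
  have hle12 : ν₁ + ν₂ ≤ ν := by
    rw [hν]
    exact Measure.le_add_right le_rfl
  have hmaps : ∀ (G : ℝ → ℝ), (∀ y, 0 ≤ G y ∧ G y ≤ 1) →
      MapsTo (fun y : ℝ => (G y, y)) (Icc 0 1) (Icc (0:ℝ) 1 ×ˢ Icc (0:ℝ) 1) :=
    fun G hG y hy => mem_prod.2 ⟨mem_Icc.2 ⟨(hG y).1, (hG y).2⟩, hy⟩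
  have hint1 : IntegrableOn (fun y => W₁ y * F (G₁ y, y)) (Icc (0:ℝ) 1) :=
    (hW₁c.continuousOn.mul (hF.comp ((hG₁c.prodMk continuous_id).continuousOn)
      (hmaps G₁ (fun y => (hGmem y).1)))).integrableOn_compact isCompact_Icc
  have hint2 : IntegrableOn (fun y => W₂ y * F (G₂ y, y)) (Icc (0:ℝ) 1) :=
    (hW₂c.continuousOn.mul (hF.comp ((hG₂c.prodMk continuous_id).continuousOn)
      (hmaps G₂ (fun y => (hGmem y).2.1)))).integrableOn_compact isCompact_Icc
  have hint3 : IntegrableOn (fun y => W₃ y * F (G₃ y, y)) (Icc (0:ℝ) 1) :=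
    (hW₃c.continuousOn.mul (hF.comp ((hG₃c.prodMk continuous_id).continuousOn)
      (hmaps G₃ (fun y => (hGmem y).2.2)))).integrableOn_compact isCompact_Icc
  rw [hμν, hν, integral_add_measure (hFint.mono_measure hle12) (hFint.mono_measure hle3),
    integral_add_measure (hFint.mono_measure hle1) (hFint.mono_measure hle2),
    hν₁, hν₂, hν₃,
    integ_eq W₁ hW₁c hW₁nn G₁ hG₁c F (hν₁ ▸ hFm.mono_measure hle1),
    integ_eq W₂ hW₂c hW₂nn G₂ hG₂c F (hν₂ ▸ hFm.mono_measure hle2),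
    integ_eq W₃ hW₃c hW₃nn G₃ hG₃c F (hν₃ ▸ hFm.mono_measure hle3),
    intervalIntegral.integral_of_le zero_le_one, ← integral_Icc_eq_integral_Ioc]
  have hsum2 : (∫ y in Icc (0:ℝ) 1,
        (W₁ y * F (G₁ y, y) + W₂ y * F (G₂ y, y) + W₃ y * F (G₃ y, y)))
      = (∫ y in Icc (0:ℝ) 1, W₁ y * F (G₁ y, y))
        + (∫ y in Icc (0:ℝ) 1, W₂ y * F (G₂ y, y))
        + (∫ y in Icc (0:ℝ) 1, W₃ y * F (G₃ y, y)) := by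
    have hint12 : IntegrableOn (fun y => W₁ y * F (G₁ y, y) + W₂ y * F (G₂ y, y))
        (Icc (0:ℝ) 1) := hint1.add hint2
    rw [integral_add hint12 hint3, integral_add hint1 hint2]
  rw [← hsum2]
  refine setIntegral_congr_fun measurableSet_Icc (fun y hy => ?_)
  simp only [hW₁, hW₂, hW₃, hG₁, hG₂, hG₃, hclid y hy]
  ring
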